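/- (Key step of Theorem 1.) Let N ≥ 1 and for each j ∈ {1,…,N} let {E^{(j)}_{i_j}} be Kraus operators of a channel on ℂ^d with at least two linearly independent Kraus operators E^{(j)}_{p_j}, E^{(j)}_{q_j} (the 'noisy' condition), and let α^{(j)}_{i_j} ∈ ℂ be amplitudes with α^{(j)}_{p_j} ≠ 0. Let φ₁,…,φ_N ∈ ℂ be all nonzero. Define E_{i₁…i_N} = Σ_{j=1}^N φ_j α^{(1)}_{i₁}⋯α^{(j−1)}_{i_{j−1}} E^{(j)}_{i_j} α^{(j+1)}_{i_{j+1}}⋯α^{(N)}_{i_N} ⊗ |j⟩, a map ℂ^d → ℂ^d ⊗ ℂ^N. Then the N+1 operators E₀ = E_{p₁…p_N} and E_k = E_{p₁…p_{k−1} q_k p_{k+1}…p_N} (k = 1,…,N) are linearly independent. -/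

import Mathlib

open Matrix

/-- The Kraus operators of the superposition of N independent channels on ℂ^d:
E_{i₁…i_N} = Σ_j φ_j (∏_{k≠j} α^{(k)}_{i_k}) E^{(j)}_{i_j} ⊗ |j⟩, as a matrix from ℂ^d
to ℂ^d ⊗ ℂ^N, for a choice f of one Kraus index per channel. -/
noncomputable def Esup {d N : ℕ} {ι : Type} (φ : Fin N → ℂ) (α : Fin N → ι → ℂ)
    (E : Fin N → ι → Matrix (Fin d) (Fin d) ℂ) (f : Fin N → ι) :
    Matrix (Fin d × Fin N) (Fin d) ℂ :=
  Matrix.of fun p b =>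
    φ p.2 * (∏ k ∈ Finset.univ.erase p.2, α k (f k)) * E p.2 (f p.2) p.1 b

/-- Key step of Theorem 1: if each of the N channels is noisy (has two linearly
independent Kraus operators E^{(j)}_{p_j}, E^{(j)}_{q_j} with α^{(j)}_{p_j} ≠ 0), and all
path amplitudes φ_j are nonzero, then the N+1 Kraus operators
E₀ = E_{p₁…p_N} and E_k = E_{p₁…q_k…p_N} of the superposition channel are linearly
independent. -/
theorem stmt13 {d N : ℕ} (hN : 1 ≤ N) {ι : Type} [Fintype ι]
    (E : Fin N → ι → Matrix (Fin d) (Fin d) ℂ)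
    (hKraus : ∀ j, ∑ i, (E j i)ᴴ * E j i = 1)
    (α : Fin N → ι → ℂ)
    (hα : ∀ j, ∑ i, ‖α j i‖ ^ 2 = 1)
    (pidx qidx : Fin N → ι)
    (hnoisy : ∀ j, LinearIndependent ℂ ![E j (pidx j), E j (qidx j)])
    (hαp : ∀ j, α j (pidx j) ≠ 0)
    (φ : Fin N → ℂ) (hφ : ∀ j, φ j ≠ 0) :
    LinearIndependent ℂ (fun o : Option (Fin N) =>
      match o with
      | none => Esup φ α E pidx
      | some k => Esup φ α E (Function.update pidx k (qidx k))) := by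

  classical
  rw [Fintype.linearIndependent_iff]
  intro g hg
  set P : Fin N → ℂ := fun j => φ j * ∏ k ∈ Finset.univ.erase j, α k (pidx k) with hP
  have hPnz : ∀ j, P j ≠ 0 := fun j =>
    mul_ne_zero (hφ j) (Finset.prod_ne_zero_iff.2 fun k _ => hαp k)
  set Q : Fin N → Fin N → ℂ := fun j k =>
    φ j * ∏ k' ∈ Finset.univ.erase j, α k' (Function.update pidx k (qidx k) k') with hQ
  have hQj : ∀ j, Q j j = P j := by
    intro j
    simp only [hQ, hP]
    congr 1
    refine Finset.prod_congr rfl fun k' hk' => ?_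
    rw [Function.update_of_ne (Finset.ne_of_mem_erase hk')]
  have hblock : ∀ j : Fin N,
      (g none * P j + ∑ k ∈ Finset.univ.erase j, g (some k) * Q j k) •
        E j (pidx j) + (g (some j) * P j) • E j (qidx j) = 0 := by
    intro j
    ext b c
    have h1 : g none * (Esup φ α E pidx) (b, j) c
        + ∑ k : Fin N, g (some k) *
          (Esup φ α E (Function.update pidx k (qidx k))) (b, j) c = 0 := by
      have h := congrFun (congrFun hg (b, j)) c
      simpa [Matrix.sum_apply, Fintype.sum_option] using h
    rw [← Finset.add_sum_erase Finset.univ _ (Finset.mem_univ j)] at h1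
    have e0 : (Esup φ α E pidx) (b, j) c = P j * E j (pidx j) b c := by
      simp [Esup, hP, mul_assoc]
    have e1 : (Esup φ α E (Function.update pidx j (qidx j))) (b, j) c
        = Q j j * E j (qidx j) b c := by
      simp [Esup, hQ, Function.update_self, mul_assoc]
    have e2' : ∑ k ∈ Finset.univ.erase j, g (some k) *
          (Esup φ α E (Function.update pidx k (qidx k))) (b, j) c
        = ∑ k ∈ Finset.univ.erase j, g (some k) * (Q j k * E j (pidx j) b c) := by
      refine Finset.sum_congr rfl fun k hk => ?_
      have hkj : k ≠ j := Finset.ne_of_mem_erase hk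
      simp [Esup, hQ, Function.update_of_ne (Ne.symm hkj), mul_assoc]
    rw [e0, e1, e2', hQj] at h1
    simp only [Matrix.add_apply, Matrix.smul_apply, Matrix.zero_apply, smul_eq_mul]
    rw [add_mul, Finset.sum_mul]
    have e3 : ∑ k ∈ Finset.univ.erase j, g (some k) * Q j k * E j (pidx j) b c
        = ∑ k ∈ Finset.univ.erase j, g (some k) * (Q j k * E j (pidx j) b c) :=
      Finset.sum_congr rfl fun k _ => mul_assoc _ _ _
    rw [e3]
    linear_combination h1
  have hcoef : ∀ j, (g none * P j + ∑ k ∈ Finset.univ.erase j, g (some k) * Q j k) = 0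
      ∧ g (some j) * P j = 0 := by
    intro j
    have h := Fintype.linearIndependent_iff.mp (hnoisy j)
      ![g none * P j + ∑ k ∈ Finset.univ.erase j, g (some k) * Q j k, g (some j) * P j]
      (by rw [Fin.sum_univ_two]; simpa using hblock j)
    exact ⟨h 0, h 1⟩
  have hgs : ∀ k, g (some k) = 0 := fun k =>
    (mul_eq_zero.mp (hcoef k).2).resolve_right (hPnz k)
  have hnone : g none = 0 := by
    have j0 : Fin N := ⟨0, hN⟩
    have h := (hcoef j0).1
    simp only [hgs, zero_mul, Finset.sum_const_zero, add_zero] at h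
    exact (mul_eq_zero.mp h).resolve_right (hPnz j0)
  intro o
  cases o with
  | none => exact hnone
  | some k => exact hgs k
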